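/- The quotient ring ℚ[x,y,z]/(y^7 + 15x^{14}, 7xy^6, 5z^4) is a ℚ-vector space of dimension 364; that is, the Milnor number of F_0 = z^5 + xy^7 + x^{15} at the origin equals 364. -/

import Mathlib

open MvPolynomial

namespace MilnorF0
noncomputable section

abbrev R3 : Type := MvPolynomial (Fin 3) ℚ

def g1 : R3 := X 1 ^ 7 + 15 * X 0 ^ 14
def g2 : R3 := 7 * X 0 * X 1 ^ 6
def g3 : R3 := 5 * X 2 ^ 4

def J : Ideal R3 := Ideal.span {g1, g2, g3}

def Std (m : Fin 3 →₀ ℕ) : Prop :=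
  m 2 ≤ 3 ∧ m 0 ≤ 14 ∧ (m 1 ≤ 5 ∨ (m 1 = 6 ∧ m 0 = 0))

def Red (m : Fin 3 →₀ ℕ) : Prop :=
  m 0 = 0 ∧ 7 ≤ m 1 ∧ m 1 ≤ 12 ∧ m 2 ≤ 3

instance : DecidablePred Std := fun m => by unfold Std; infer_instance
instance : DecidablePred Red := fun m => by unfold Red; infer_instance

def Idx : Type := {p : Fin 15 × Fin 7 × Fin 4 // p.2.1.val = 6 → p.1.val = 0}

instance : Fintype Idx := by unfold Idx; infer_instance

set_option maxRecDepth 10000 in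
lemma card_Idx : Fintype.card Idx = 364 := by decide

def ev (p : Idx) : Fin 3 →₀ ℕ :=
  Finsupp.single 0 p.1.1.val + Finsupp.single 1 p.1.2.1.val + Finsupp.single 2 p.1.2.2.val

@[simp] lemma ev_0 (p : Idx) : ev p 0 = p.1.1.val := by
  simp [ev, Finsupp.single_apply]
@[simp] lemma ev_1 (p : Idx) : ev p 1 = p.1.2.1.val := by
  simp [ev, Finsupp.single_apply]
@[simp] lemma ev_2 (p : Idx) : ev p 2 = p.1.2.2.val := by
  simp [ev, Finsupp.single_apply]

def idx (m : Fin 3 →₀ ℕ) (h : Std m) : Idx :=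
  ⟨(⟨m 0, by obtain ⟨h2, h0, h1⟩ := h; omega⟩,
    ⟨m 1, by obtain ⟨h2, h0, h1⟩ := h; omega⟩,
    ⟨m 2, by obtain ⟨h2, h0, h1⟩ := h; omega⟩),
   by intro h6; simp only [Fin.val_mk] at h6 ⊢; obtain ⟨h2, h0, h1⟩ := h; omega⟩

def idxR (m : Fin 3 →₀ ℕ) (h : Red m) : Idx :=
  ⟨(⟨14, by norm_num⟩,
    ⟨m 1 - 7, by obtain ⟨h0, h7, h12, h2⟩ := h; omega⟩,
    ⟨m 2, by obtain ⟨h0, h7, h12, h2⟩ := h; omega⟩),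
   by intro h6; simp only [Fin.val_mk] at h6 ⊢; obtain ⟨h0, h7, h12, h2⟩ := h; omega⟩

def c (m : Fin 3 →₀ ℕ) : Idx →₀ ℚ :=
  if h : Std m then Finsupp.single (idx m h) 1
  else if h' : Red m then Finsupp.single (idxR m h') (-15)
  else 0

lemma c_std {m : Fin 3 →₀ ℕ} (h : Std m) : c m = Finsupp.single (idx m h) 1 := dif_pos h

lemma c_red {m : Fin 3 →₀ ℕ} (h1 : ¬ Std m) (h2 : Red m) :
    c m = Finsupp.single (idxR m h2) (-15) := by
  rw [c, dif_neg h1, dif_pos h2]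

lemma c_zero {m : Fin 3 →₀ ℕ} (h1 : ¬ Std m) (h2 : ¬ Red m) : c m = 0 := by
  rw [c, dif_neg h1, dif_neg h2]

def φ : R3 →ₗ[ℚ] (Idx →₀ ℚ) := (basisMonomials (Fin 3) ℚ).constr ℚ c

lemma φ_monomial (m : Fin 3 →₀ ℕ) : φ (monomial m 1) = c m := by
  rw [show (monomial m 1 : R3) = basisMonomials (Fin 3) ℚ m from rfl, φ, Module.Basis.constr_basis]

lemma φ_monomial' (m : Fin 3 →₀ ℕ) (a : ℚ) : φ (monomial m a) = a • c m := by
  rw [show (monomial m a : R3) = a • monomial m 1 by rw [smul_monomial]; norm_num,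
    map_smul, φ_monomial]

lemma std_ev (p : Idx) : Std (ev p) := by
  obtain ⟨⟨⟨i, hi⟩, ⟨j, hj⟩, ⟨k, hk⟩⟩, hp⟩ := p
  simp only [Std]
  have e0 := ev_0 (⟨(⟨i, hi⟩, ⟨j, hj⟩, ⟨k, hk⟩), hp⟩ : Idx)
  have e1 := ev_1 (⟨(⟨i, hi⟩, ⟨j, hj⟩, ⟨k, hk⟩), hp⟩ : Idx)
  have e2 := ev_2 (⟨(⟨i, hi⟩, ⟨j, hj⟩, ⟨k, hk⟩), hp⟩ : Idx)
  dsimp only at e0 e1 e2 hp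
  rw [e0, e1, e2]
  refine ⟨by omega, by omega, ?_⟩
  by_cases h6 : j = 6
  · exact Or.inr ⟨h6, hp h6⟩
  · exact Or.inl (by omega)

lemma ev_idx (m : Fin 3 →₀ ℕ) (h : Std m) : ev (idx m h) = m := by
  ext a
  fin_cases a <;> simp [ev, idx, Finsupp.single_apply]

lemma idx_ev (p : Idx) : idx (ev p) (std_ev p) = p := by
  apply Subtype.ext
  refine Prod.ext (Fin.ext ?_) (Prod.ext (Fin.ext ?_) (Fin.ext ?_)) <;> simp [idx]

lemma c_ev (p : Idx) : c (ev p) = Finsupp.single p 1 := by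
  rw [c_std (std_ev p), idx_ev]

lemma hg1 : g1 ∈ J := Ideal.subset_span (by simp)
lemma hg2 : g2 ∈ J := Ideal.subset_span (by simp)
lemma hg3 : g3 ∈ J := Ideal.subset_span (by simp)

lemma cancel_num (q : ℚ) (hq : q ≠ 0) (p f : R3) (h : C q * p = f) (hf : f ∈ J) : p ∈ J := by
  have : p = C q⁻¹ * f := by
    rw [← h, ← mul_assoc, ← C_mul, inv_mul_cancel₀ hq, C_1, one_mul]
  rw [this]; exact Ideal.mul_mem_left _ _ hf

lemma hz4 : (X 2 ^ 4 : R3) ∈ J := by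
  refine cancel_num 5 (by norm_num) _ g3 ?_ hg3
  rw [g3, map_ofNat]

lemma hxy6 : (X 0 * X 1 ^ 6 : R3) ∈ J := by
  refine cancel_num 7 (by norm_num) _ g2 ?_ hg2
  rw [g2, map_ofNat, mul_assoc]

lemma hx15 : (X 0 ^ 15 : R3) ∈ J := by
  refine cancel_num 105 (by norm_num) _ (7 * X 0 * g1 - X 1 * g2) ?_
    (sub_mem (Ideal.mul_mem_left _ _ hg1) (Ideal.mul_mem_left _ _ hg2))
  rw [g1, g2, map_ofNat]; ring

lemma monomial_factor (m u : Fin 3 →₀ ℕ) (h : ∀ a, u a ≤ m a) :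
    monomial m (1 : ℚ) = monomial (m - u) 1 * monomial u 1 := by
  have huu : m - u + u = m := by
    ext a
    have := h a
    simp only [Finsupp.add_apply, Finsupp.tsub_apply]
    omega
  rw [monomial_mul, one_mul, huu]

lemma X0X16 : (X 0 * X 1 ^ 6 : R3)
    = monomial (Finsupp.single 0 1 + Finsupp.single 1 6) 1 := by
  rw [X_pow_eq_monomial, show (X 0 : R3) = monomial (Finsupp.single 0 1) 1 from rfl,
    monomial_mul, one_mul]

lemma mul_g1 (u : Fin 3 →₀ ℕ) : monomial u (1:ℚ) * g1
    = monomial (u + Finsupp.single 1 7) 1 + monomial (u + Finsupp.single 0 14) 15 := by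
  have h15 : (15 : R3) * monomial (Finsupp.single 0 14) 1 = monomial (Finsupp.single 0 14) 15 := by
    rw [← map_ofNat (C : ℚ →+* R3) 15, C_mul_monomial, mul_one]
  rw [g1, mul_add, X_pow_eq_monomial, X_pow_eq_monomial, h15, monomial_mul, monomial_mul]
  norm_num

lemma mul_g2 (u : Fin 3 →₀ ℕ) : monomial u (1:ℚ) * g2
    = monomial (u + (Finsupp.single 0 1 + Finsupp.single 1 6)) 7 := by
  have h7 : g2 = monomial (Finsupp.single 0 1 + Finsupp.single 1 6) 7 := by
    rw [g2, mul_assoc, X0X16, ← map_ofNat (C : ℚ →+* R3) 7, C_mul_monomial, mul_one]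
  rw [h7, monomial_mul, one_mul]

lemma mul_g3 (u : Fin 3 →₀ ℕ) : monomial u (1:ℚ) * g3
    = monomial (u + Finsupp.single 2 4) 5 := by
  have h5 : g3 = monomial (Finsupp.single 2 4) 5 := by
    rw [g3, X_pow_eq_monomial, ← map_ofNat (C : ℚ →+* R3) 5, C_mul_monomial, mul_one]
  rw [h5, monomial_mul, one_mul]

lemma memJ_z {m : Fin 3 →₀ ℕ} (h : 4 ≤ m 2) : monomial m (1:ℚ) ∈ J := by
  rw [monomial_factor m (Finsupp.single 2 4)
      (by intro a; fin_cases a <;> simp [Finsupp.single_apply] <;> omega),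
    ← X_pow_eq_monomial]
  exact Ideal.mul_mem_left _ _ hz4

lemma memJ_x15 {m : Fin 3 →₀ ℕ} (h : 15 ≤ m 0) : monomial m (1:ℚ) ∈ J := by
  rw [monomial_factor m (Finsupp.single 0 15)
      (by intro a; fin_cases a <;> simp [Finsupp.single_apply] <;> omega),
    ← X_pow_eq_monomial]
  exact Ideal.mul_mem_left _ _ hx15

lemma memJ_xy6 {m : Fin 3 →₀ ℕ} (h0 : 1 ≤ m 0) (h1 : 6 ≤ m 1) : monomial m (1:ℚ) ∈ J := by
  rw [monomial_factor m (Finsupp.single 0 1 + Finsupp.single 1 6)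
      (by intro a; fin_cases a <;> simp [Finsupp.add_apply, Finsupp.single_apply] <;> omega),
    ← X0X16]
  exact Ideal.mul_mem_left _ _ hxy6

lemma memJ_y13 {m : Fin 3 →₀ ℕ} (h0 : m 0 = 0) (h13 : 13 ≤ m 1) : monomial m (1:ℚ) ∈ J := by
  set u := m - Finsupp.single 1 7 with hu
  have hum : u + Finsupp.single 1 7 = m := by
    ext a
    fin_cases a <;>
      simp [hu, Finsupp.add_apply, Finsupp.tsub_apply, Finsupp.single_apply] <;> omega
  have h2 : monomial (u + Finsupp.single 0 14) (1:ℚ) ∈ J := by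
    apply memJ_xy6 <;>
      simp [hu, Finsupp.add_apply, Finsupp.tsub_apply, Finsupp.single_apply] <;> omega
  have h15mem : monomial (u + Finsupp.single 0 14) (15:ℚ) ∈ J := by
    have he : monomial (u + Finsupp.single 0 14) (15:ℚ)
        = C 15 * monomial (u + Finsupp.single 0 14) 1 := by rw [C_mul_monomial, mul_one]
    rw [he]; exact Ideal.mul_mem_left _ _ h2
  have hs := J.sub_mem (Ideal.mul_mem_left J (monomial u 1) hg1) h15mem
  rw [mul_g1, hum, add_sub_cancel_right] at hs
  exact hs

lemma phi_g3_zero (m : Fin 3 →₀ ℕ) : φ (monomial m 1 * g3) = 0 := by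
  rw [mul_g3, φ_monomial', c_zero, smul_zero]
  · intro hs; have := hs.1; simp [Finsupp.single_apply] at this
  · intro hr; have := hr.2.2.2; simp [Finsupp.single_apply] at this

lemma phi_g2_zero (m : Fin 3 →₀ ℕ) : φ (monomial m 1 * g2) = 0 := by
  rw [mul_g2, φ_monomial', c_zero, smul_zero]
  · intro hs
    have h1 := hs.2.2
    simp [Finsupp.add_apply, Finsupp.single_apply] at h1
  · intro hr
    have := hr.1
    simp [Finsupp.add_apply, Finsupp.single_apply] at this

lemma phi_g1_zero (m : Fin 3 →₀ ℕ) : φ (monomial m 1 * g1) = 0 := by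
  rw [mul_g1, map_add, φ_monomial, φ_monomial']
  have e17_0 : ((m + Finsupp.single 1 7 : Fin 3 →₀ ℕ)) 0 = m 0 := by simp
  have e17_1 : ((m + Finsupp.single 1 7 : Fin 3 →₀ ℕ)) 1 = m 1 + 7 := by simp
  have e17_2 : ((m + Finsupp.single 1 7 : Fin 3 →₀ ℕ)) 2 = m 2 := by simp
  have e14_0 : ((m + Finsupp.single 0 14 : Fin 3 →₀ ℕ)) 0 = m 0 + 14 := by simp
  have e14_1 : ((m + Finsupp.single 0 14 : Fin 3 →₀ ℕ)) 1 = m 1 := by simp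
  have e14_2 : ((m + Finsupp.single 0 14 : Fin 3 →₀ ℕ)) 2 = m 2 := by simp
  have hns17 : ¬ Std (m + Finsupp.single 1 7) := by
    simp only [Std, e17_0, e17_1, e17_2]; omega
  by_cases hc : m 0 = 0 ∧ m 1 ≤ 5 ∧ m 2 ≤ 3
  · obtain ⟨h0, h1, h2⟩ := hc
    have hred : Red (m + Finsupp.single 1 7) := by
      simp only [Red, e17_0, e17_1, e17_2]; omega
    have hstd : Std (m + Finsupp.single 0 14) := by
      simp only [Std, e14_0, e14_1, e14_2]; omega
    rw [c_red hns17 hred, c_std hstd]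
    have hq : idxR _ hred = idx _ hstd := by
      apply Subtype.ext
      refine Prod.ext (Fin.ext ?_) (Prod.ext (Fin.ext ?_) (Fin.ext ?_)) <;>
        simp [idx, idxR, e17_1, e17_2, e14_0, e14_1, e14_2] <;> omega
    rw [hq, Finsupp.smul_single, ← Finsupp.single_add]
    norm_num
  · have hnr17 : ¬ Red (m + Finsupp.single 1 7) := by
      simp only [Red, e17_0, e17_1, e17_2]; omega
    have hns14 : ¬ Std (m + Finsupp.single 0 14) := by
      simp only [Std, e14_0, e14_1, e14_2]; omega
    have hnr14 : ¬ Red (m + Finsupp.single 0 14) := by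
      simp only [Red, e14_0, e14_1, e14_2]; omega
    rw [c_zero hns17 hnr17, c_zero hns14 hnr14, smul_zero, add_zero]

lemma phi_mul_left (g : R3) (hg : ∀ m, φ (monomial m 1 * g) = 0) (r : R3) : φ (r * g) = 0 := by
  have h : φ.comp (LinearMap.mulRight ℚ g) = 0 := by
    apply (basisMonomials (Fin 3) ℚ).ext
    intro m
    simpa using hg m
  simpa using LinearMap.congr_fun h r

lemma phi_J {f : R3} (hf : f ∈ J) : φ f = 0 := by
  rw [J, show ({g1, g2, g3} : Set R3) = insert g1 (insert g2 {g3}) from rfl] at hf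
  obtain ⟨a, z, hz, rfl⟩ := Ideal.mem_span_insert.mp hf
  obtain ⟨b, w, hw, rfl⟩ := Ideal.mem_span_insert.mp hz
  obtain ⟨d, rfl⟩ := Ideal.mem_span_singleton'.mp hw
  simp only [smul_eq_mul, map_add]
  rw [phi_mul_left g1 phi_g1_zero, phi_mul_left g2 phi_g2_zero, phi_mul_left g3 phi_g3_zero]
  simp

def ψ : (Idx →₀ ℚ) →ₗ[ℚ] (R3 ⧸ J) :=
  Finsupp.linearCombination ℚ (fun p : Idx => Ideal.Quotient.mk J (monomial (ev p) 1))

lemma lc_single (v : Idx →₀ ℚ) :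
    Finsupp.linearCombination ℚ (fun p : Idx => Finsupp.single p (1:ℚ)) v = v := by
  rw [Finsupp.linearCombination_apply]
  simp only [Finsupp.smul_single, smul_eq_mul, mul_one]
  exact Finsupp.sum_single v

lemma psi_inj : Function.Injective ψ := by
  rw [← LinearMap.ker_eq_bot]
  rw [LinearMap.ker_eq_bot']
  intro v hv
  set f : R3 := Finsupp.linearCombination ℚ (fun p : Idx => (monomial (ev p) 1 : R3)) v with hf
  have hmk : Ideal.Quotient.mk J f = ψ v := by
    rw [hf]
    have := Finsupp.apply_linearCombination ℚ (Ideal.Quotient.mkₐ ℚ J).toLinearMap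
      (fun p : Idx => (monomial (ev p) 1 : R3)) v
    simpa [ψ, Function.comp_def] using this
  have hfJ : f ∈ J := Ideal.Quotient.eq_zero_iff_mem.mp (hmk.trans hv)
  have hphi : φ f = v := by
    rw [hf, Finsupp.apply_linearCombination]
    have hcomp : (φ ∘ fun p : Idx => (monomial (ev p) 1 : R3))
        = fun p : Idx => Finsupp.single p (1:ℚ) := by
      funext p
      simp [Function.comp, φ_monomial, c_ev]
    rw [hcomp, lc_single]
  rw [phi_J hfJ] at hphi
  exact hphi.symm

lemma psi_single (p : Idx) (a : ℚ) :
    ψ (Finsupp.single p a) = a • Ideal.Quotient.mk J (monomial (ev p) 1) := by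
  rw [ψ, Finsupp.linearCombination_single]

lemma mk_monomial_mem (m : Fin 3 →₀ ℕ) :
    Ideal.Quotient.mk J (monomial m 1) ∈ LinearMap.range ψ := by
  by_cases h : Std m
  · exact ⟨Finsupp.single (idx m h) 1, by rw [psi_single, ev_idx, one_smul]⟩
  by_cases h' : Red m
  · refine ⟨Finsupp.single (idxR m h') (-15), ?_⟩
    rw [psi_single]
    obtain ⟨h0, h7, h12, h2⟩ := h'
    set u := m - Finsupp.single 1 7 with hu
    have hum : u + Finsupp.single 1 7 = m := by
      ext a
      fin_cases a <;>
        simp [hu, Finsupp.add_apply, Finsupp.tsub_apply, Finsupp.single_apply] <;> omega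
    have hev : ev (idxR m ⟨h0, h7, h12, h2⟩) = u + Finsupp.single 0 14 := by
      ext a
      fin_cases a <;>
        simp [hu, idxR, ev, Finsupp.add_apply, Finsupp.tsub_apply, Finsupp.single_apply] <;> omega
    have key : monomial m (1:ℚ) + monomial (u + Finsupp.single 0 14) 15 ∈ J := by
      have := Ideal.mul_mem_left J (monomial u 1) hg1
      rwa [mul_g1, hum] at this
    rw [hev, ← Ideal.Quotient.mkₐ_eq_mk ℚ J, ← map_smul, smul_monomial,
      Ideal.Quotient.mkₐ_eq_mk, Ideal.Quotient.eq]
    have hid : monomial (u + Finsupp.single 0 14) ((-15:ℚ) • (1:ℚ)) - monomial m 1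
        = -(monomial m (1:ℚ) + monomial (u + Finsupp.single 0 14) 15) := by
      rw [smul_eq_mul, mul_one, show ((-15:ℚ)) = -(15:ℚ) from rfl, map_neg]
      ring
    rw [hid]
    exact neg_mem key
  · -- monomial m 1 ∈ J
    have hmem : monomial m (1:ℚ) ∈ J := by
      simp only [Std, Red, not_and_or, not_or, not_le] at h h'
      by_cases hk : 4 ≤ m 2
      · exact memJ_z hk
      by_cases hx : 15 ≤ m 0
      · exact memJ_x15 hx
      by_cases hxy : 1 ≤ m 0 ∧ 6 ≤ m 1
      · exact memJ_xy6 hxy.1 hxy.2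
      · have h013 : m 0 = 0 ∧ 13 ≤ m 1 := by omega
        exact memJ_y13 h013.1 h013.2
    refine ⟨0, ?_⟩
    rw [map_zero, eq_comm, Ideal.Quotient.eq_zero_iff_mem]
    exact hmem

lemma psi_surj : Function.Surjective ψ := by
  intro a
  obtain ⟨f, rfl⟩ := Ideal.Quotient.mk_surjective a
  suffices h : Ideal.Quotient.mk J f ∈ LinearMap.range ψ from h
  induction f using MvPolynomial.induction_on' with
  | monomial u a =>
      have hsm : (monomial u a : R3) = a • monomial u 1 := by rw [smul_monomial]; norm_num
      rw [hsm, ← Ideal.Quotient.mkₐ_eq_mk ℚ J, map_smul, Ideal.Quotient.mkₐ_eq_mk]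
      exact Submodule.smul_mem _ a (mk_monomial_mem u)
  | add p q hp hq => rw [map_add]; exact add_mem hp hq

lemma main : Module.finrank ℚ (R3 ⧸ J) = 364 := by
  have e := LinearEquiv.ofBijective ψ ⟨psi_inj, psi_surj⟩
  rw [← e.finrank_eq, Module.finrank_finsupp_self, card_Idx]

end
end MilnorF0

/-- The Milnor number of `F₀ = z^5 + xy^7 + x^15` at the origin is `364`:
`ℚ[x,y,z]/(y^7 + 15x^14, 7xy^6, 5z^4)` has ℚ-dimension `364`. -/
theorem milnor_number_F0 :
    Module.finrank ℚ (MvPolynomial (Fin 3) ℚ ⧸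
      Ideal.span {(X 1 : MvPolynomial (Fin 3) ℚ) ^ 7 + 15 * X 0 ^ 14,
        7 * X 0 * X 1 ^ 6, 5 * X 2 ^ 4}) = 364 :=
  MilnorF0.main
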